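/- For a graph G without isolated vertices and any eigenvalue λ of G, every vertex of G belongs to the vertex set of some λ-star complement, i.e., for every v ∈ V(G) there exists a λ-star set X of G with v ∉ X. -/

import Mathlib

open Matrix

noncomputable def eigSpace {m : Type*} [Fintype m] [DecidableEq m]
    (A : Matrix m m ℝ) (lam : ℝ) : Submodule ℝ (m → ℝ) :=
  LinearMap.ker (Matrix.mulVecLin (A - lam • (1 : Matrix m m ℝ)))

/-- `lam` is an eigenvalue of the real matrix `A`. -/
def IsEig {m : Type*} [Fintype m] [DecidableEq m] (A : Matrix m m ℝ) (lam : ℝ) : Prop :=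
  eigSpace A lam ≠ ⊥

/-- The multiplicity of `lam` as an eigenvalue of `A`. -/
noncomputable def multE {m : Type*} [Fintype m] [DecidableEq m]
    (A : Matrix m m ℝ) (lam : ℝ) : ℕ :=
  Module.finrank ℝ (eigSpace A lam)

/-- `lam` is a main eigenvalue of `A`: its eigenspace is not orthogonal to the all-ones
vector. -/
def IsMainEig {m : Type*} [Fintype m] [DecidableEq m] (A : Matrix m m ℝ) (lam : ℝ) : Prop :=
  ∃ x ∈ eigSpace A lam, ∑ i, x i ≠ 0

/-- The adjacency matrix of the subgraph of `G` induced by the vertex set `S`. -/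
def indMatrix {n : ℕ} (G : SimpleGraph (Fin n)) [DecidableRel G.Adj] (S : Finset (Fin n)) :
    Matrix S S ℝ :=
  (G.adjMatrix ℝ).submatrix (fun i => (i : Fin n)) (fun j => (j : Fin n))

/-- `X` is a `lam`-star set of `G`: its cardinality equals the multiplicity of `lam`
and `lam` is not an eigenvalue of the subgraph induced by the complement of `X`. -/
def IsStarSet {n : ℕ} (G : SimpleGraph (Fin n)) [DecidableRel G.Adj] (lam : ℝ)
    (X : Finset (Fin n)) : Prop :=
  X.card = multE (G.adjMatrix ℝ) lam ∧ ¬ IsEig (indMatrix G Xᶜ) lam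

/-- The block `N` of the adjacency matrix: rows indexed by `Xᶜ`, columns by `X`. -/
def Nmat {n : ℕ} (G : SimpleGraph (Fin n)) [DecidableRel G.Adj] (X : Finset (Fin n)) :
    Matrix ↥(Xᶜ) ↥X ℝ :=
  (G.adjMatrix ℝ).submatrix (fun i => (i : Fin n)) (fun j => (j : Fin n))

/-- The block `C` of the adjacency matrix: the adjacency matrix of `G - X`. -/
def Cmat {n : ℕ} (G : SimpleGraph (Fin n)) [DecidableRel G.Adj] (X : Finset (Fin n)) :
    Matrix ↥(Xᶜ) ↥(Xᶜ) ℝ :=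
  indMatrix G Xᶜ


/-- Extraction lemma: if elements of `E` are determined by their coordinates away from `v`,
then there is a coordinate set `X` avoiding `v`, of size `finrank E`, such that elements of
`E` are determined by their coordinates on `X`. -/
lemma extract_coords {n : ℕ} (E : Submodule ℝ (Fin n → ℝ)) (v : Fin n)
    (hv : ∀ x ∈ E, (∀ j, j ≠ v → x j = 0) → x = 0) :
    ∃ X : Finset (Fin n), v ∉ X ∧ X.card = Module.finrank ℝ E ∧
      ∀ x ∈ E, (∀ i ∈ X, x i = 0) → x = 0 := by
  classical
  set f : Fin n → Module.Dual ℝ E := fun i => (LinearMap.proj i).comp E.subtype with hf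
  set s : Set (Module.Dual ℝ E) := f '' {i | i ≠ v} with hs
  have hspan : Submodule.span ℝ s = ⊤ := by
    have hco : (Submodule.span ℝ s).dualCoannihilator = ⊥ := by
      rw [Submodule.eq_bot_iff]
      intro x hx
      rw [Submodule.mem_dualCoannihilator] at hx
      have hx0 : (x : Fin n → ℝ) = 0 := by
        apply hv x x.2
        intro j hj
        have := hx (f j) (Submodule.subset_span ⟨j, hj, rfl⟩)
        simpa [hf] using this
      exact Subtype.ext hx0
    have h1 := Subspace.finrank_add_finrank_dualCoannihilator_eq (Submodule.span ℝ s)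
    rw [hco, finrank_bot, add_zero] at h1
    exact Submodule.eq_top_of_finrank_eq (by rw [h1, Subspace.dual_finrank_eq])
  obtain ⟨b, hbs, hbsp, hbli⟩ := exists_linearIndependent ℝ s
  rw [hspan] at hbsp
  haveI : Fintype b := hbli.setFinite.fintype
  let B : Module.Basis b ℝ (Module.Dual ℝ E) := Module.Basis.mk hbli (by rw [Subtype.range_coe, hbsp])
  have hcard : Fintype.card b = Module.finrank ℝ E := by
    rw [← Module.finrank_eq_card_basis B, Subspace.dual_finrank_eq]
  have hchoose : ∀ w : b, ∃ i : Fin n, i ≠ v ∧ f i = (w : Module.Dual ℝ E) := by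
    intro w
    obtain ⟨i, hi, hfi⟩ := hbs w.2
    exact ⟨i, hi, hfi⟩
  choose g hg1 hg2 using hchoose
  have hginj : Function.Injective g := by
    intro w w' h
    exact Subtype.ext (by rw [← hg2 w, ← hg2 w', h])
  refine ⟨Finset.univ.image g, ?_, ?_, ?_⟩
  · simp only [Finset.mem_image]
    rintro ⟨w, -, hw⟩
    exact hg1 w hw
  · rw [Finset.card_image_of_injective _ hginj, Finset.card_univ, hcard]
  · intro x hx hxi
    have hb0 : b ⊆ (LinearMap.ker (Module.Dual.eval ℝ E ⟨x, hx⟩) : Set (Module.Dual ℝ E)) := by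
      intro w hw
      have : f (g ⟨w, hw⟩) (⟨x, hx⟩ : E) = 0 := by
        simp only [hf, LinearMap.comp_apply]
        exact hxi (g ⟨w, hw⟩) (Finset.mem_image.mpr ⟨⟨w, hw⟩, Finset.mem_univ _, rfl⟩)
      rw [hg2 ⟨w, hw⟩] at this
      simpa using this
    have hall : ∀ φ : Module.Dual ℝ E, φ ⟨x, hx⟩ = 0 := by
      intro φ
      have : φ ∈ LinearMap.ker (Module.Dual.eval ℝ E ⟨x, hx⟩) := by
        have := Submodule.span_le.mpr hb0
        rw [hbsp] at this
        exact this trivial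
      simpa using this
    have : (⟨x, hx⟩ : E) = 0 := (Module.forall_dual_apply_eq_zero_iff ℝ _).mp hall
    simpa using congrArg Subtype.val this

theorem stmt10 {n : ℕ} (G : SimpleGraph (Fin n)) [DecidableRel G.Adj] (lam : ℝ)
    (hiso : ∀ v : Fin n, ∃ u, G.Adj v u)
    (hlam : IsEig (G.adjMatrix ℝ) lam) :
    ∀ v : Fin n, ∃ X : Finset (Fin n), IsStarSet G lam X ∧ v ∉ X := by
  classical
  intro v
  set A : Matrix (Fin n) (Fin n) ℝ := G.adjMatrix ℝ with hA
  set M : Matrix (Fin n) (Fin n) ℝ := A - lam • (1 : Matrix (Fin n) (Fin n) ℝ) with hM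
  set E : Submodule ℝ (Fin n → ℝ) := eigSpace A lam with hE
  have hEker : ∀ x, x ∈ E ↔ M.mulVec x = 0 := by
    intro x
    rw [hE, eigSpace, LinearMap.mem_ker, Matrix.mulVecLin_apply, ← hM]
  have hMsymm : Mᵀ = M := by
    rw [hM, transpose_sub, transpose_smul, transpose_one, hA,
      SimpleGraph.transpose_adjMatrix]
  -- Lemma A
  have hv : ∀ x ∈ E, (∀ j, j ≠ v → x j = 0) → x = 0 := by
    intro x hx hj
    obtain ⟨u, hu⟩ := hiso v
    have huv : u ≠ v := (G.ne_of_adj hu).symm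
    have h0 : M.mulVec x = 0 := (hEker x).mp hx
    have h2 : ∑ j, M u j * x j = 0 := by
      have h1 : (M.mulVec x) u = 0 := by rw [h0]; rfl
      rw [← h1]; rfl
    rw [Finset.sum_eq_single v (fun j _ hjv => by rw [hj j hjv, mul_zero])
      (fun h => absurd (Finset.mem_univ v) h)] at h2
    have hMuv : M u v = 1 := by
      rw [hM]
      simp [Matrix.one_apply_ne huv, hA, hu.symm]
    rw [hMuv, one_mul] at h2
    funext j
    by_cases hjv : j = v
    · rw [hjv]; exact h2
    · exact hj j hjv
  obtain ⟨X, hvX, hXcard, hker⟩ := extract_coords E v hv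
  refine ⟨X, ⟨hXcard, ?_⟩, hvX⟩
  rw [IsEig, not_not, Submodule.eq_bot_iff]
  intro y hy
  rw [eigSpace, LinearMap.mem_ker, Matrix.mulVecLin_apply] at hy
  set x : Fin n → ℝ := fun i => if h : i ∈ Xᶜ then y ⟨i, h⟩ else 0 with hx
  have hx1 : ∀ i ∈ X, x i = 0 := by
    intro i hi
    rw [hx]
    simp [Finset.mem_compl, hi]
  have hxy : ∀ j : ↥(Xᶜ), x (↑j) = y j := fun j => dif_pos j.2
  set z : Fin n → ℝ := M.mulVec x with hz
  have hCM : ∀ a b : ↥(Xᶜ), (indMatrix G Xᶜ - lam • 1) a b = M (↑a) (↑b) := by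
    intro a b
    rw [Matrix.sub_apply, Matrix.smul_apply, hM, Matrix.sub_apply, Matrix.smul_apply]
    have h1 : (indMatrix G Xᶜ) a b = A (↑a) (↑b) := rfl
    have h2 : (1 : Matrix ↥(Xᶜ) ↥(Xᶜ) ℝ) a b = (1 : Matrix (Fin n) (Fin n) ℝ) (↑a) (↑b) := by
      by_cases hab : a = b
      · rw [hab, Matrix.one_apply_eq, Matrix.one_apply_eq]
      · rw [Matrix.one_apply_ne hab, Matrix.one_apply_ne (fun h => hab (Subtype.ext h))]
    rw [h1, h2]
  have hzsupp : ∀ i ∈ Xᶜ, z i = 0 := by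
    intro i hi
    have hstep : z i = ∑ j ∈ Xᶜ, M i j * x j := by
      rw [hz, Matrix.mulVec, dotProduct]
      refine (Finset.sum_subset (Finset.subset_univ Xᶜ) ?_).symm
      intro j _ hj
      have hxj : x j = 0 := by rw [hx]; simp [hj]
      rw [hxj, mul_zero]
    have hstep2 : ∑ j ∈ Xᶜ, M i j * x j
        = ((indMatrix G Xᶜ - lam • 1).mulVec y) ⟨i, hi⟩ := by
      rw [Matrix.mulVec, dotProduct, ← Finset.sum_coe_sort (Xᶜ) (fun j => M i j * x j)]
      refine Finset.sum_congr rfl ?_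
      intro j _
      rw [hCM ⟨i, hi⟩ j, hxy j]
    rw [hstep, hstep2, hy]
    rfl
  have hperp : ∀ u ∈ E, z ⬝ᵥ u = 0 := by
    intro u hu
    have h1 : z ⬝ᵥ u = x ⬝ᵥ M.mulVec u := by
      rw [hz, dotProduct_comm, Matrix.dotProduct_mulVec, ← Matrix.mulVec_transpose,
        hMsymm, dotProduct_comm, Matrix.dotProduct_mulVec, ← Matrix.mulVec_transpose,
        hMsymm]
    rw [h1, (hEker u).mp hu, dotProduct_zero]
  -- restriction map E → ℝ^X is surjective
  let ρ : E →ₗ[ℝ] (↥X → ℝ) :=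
    (LinearMap.funLeft ℝ ℝ (fun i : ↥X => (i : Fin n))).comp E.subtype
  have hρinj : Function.Injective ρ := by
    rw [← LinearMap.ker_eq_bot, Submodule.eq_bot_iff]
    intro u hu0
    rw [LinearMap.mem_ker] at hu0
    have : (u : Fin n → ℝ) = 0 := by
      refine hker u u.2 ?_
      intro i hi
      exact congrFun hu0 ⟨i, hi⟩
    exact Subtype.ext this
  have hρsurj : Function.Surjective ρ := by
    have hfr : Module.finrank ℝ E = Module.finrank ℝ (↥X → ℝ) := by
      rw [Module.finrank_pi, ← hXcard, Fintype.card_coe]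
    exact (LinearMap.injective_iff_surjective_of_finrank_eq_finrank hfr).mp hρinj
  obtain ⟨u, hu⟩ := hρsurj (fun i : ↥X => z (↑i))
  have huX : ∀ i (hi : i ∈ X), (u : Fin n → ℝ) i = z i := fun i hi => congrFun hu ⟨i, hi⟩
  have hzu : z ⬝ᵥ (u : Fin n → ℝ) = 0 := hperp (↑u) u.2
  rw [dotProduct] at hzu
  have hsum : ∑ i, z i * (u : Fin n → ℝ) i = ∑ i ∈ X, z i * z i := by
    rw [← Finset.sum_subset (Finset.subset_univ X)
      (fun j _ hj => by rw [hzsupp j (Finset.mem_compl.mpr hj), zero_mul])]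
    exact Finset.sum_congr rfl fun i hi => by rw [huX i hi]
  rw [hsum] at hzu
  have hzX : ∀ i ∈ X, z i = 0 := by
    intro i hi
    exact mul_self_eq_zero.mp
      ((Finset.sum_eq_zero_iff_of_nonneg (fun i _ => mul_self_nonneg (z i))).mp hzu i hi)
  have hz0 : z = 0 := by
    funext i
    by_cases hi : i ∈ X
    · exact hzX i hi
    · exact hzsupp i (Finset.mem_compl.mpr hi)
  have hxE : x ∈ E := (hEker x).mpr (by rw [← hz]; exact hz0)
  have hx0 : x = 0 := hker x hxE hx1
  funext j
  rw [Pi.zero_apply, ← hxy j, hx0]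
  rfl
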